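/- For a compact subset W ⊆ X and δ > 0, the set C(W,δ) := { K ∈ K(X) : ∃ x ∈ W with closure(B_δ(x)) ⊆ K } is compact in the Hausdorff metric topology on K(X). -/
import Mathlib


open Metric Set TopologicalSpace

theorem isCompact_C_W_delta {X : Type*} [MetricSpace X] [CompactSpace X]
    (W : Set X) (hW : IsCompact W) (δ : ℝ) (hδ : 0 < δ) :
    IsCompact {K : NonemptyCompacts X | ∃ x ∈ W, closure (Metric.ball x δ) ⊆ (K : Set X)} := by
  have hclosed : IsClosed {K : NonemptyCompacts X |
      ∃ x ∈ W, closure (Metric.ball x δ) ⊆ (K : Set X)} := by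
    apply IsSeqClosed.isClosed
    intro Kn K hKn hlim
    choose x hxW hx using hKn
    obtain ⟨z, hzW, φ, hφ, hz⟩ := hW.tendsto_subseq hxW
    refine ⟨z, hzW, fun y hy => ?_⟩
    have hKclosed : IsClosed (K : Set X) := K.isCompact.isClosed
    rw [← hKclosed.closure_eq, Metric.mem_closure_iff]
    intro ε hε
    obtain ⟨y', hy', hyy'⟩ := Metric.mem_closure_iff.1 hy (ε / 3) (by linarith)
    have hy'z : dist y' z < δ := mem_ball.1 hy'
    -- eventually x (φ n) is close to z
    obtain ⟨N1, h1⟩ := Metric.tendsto_atTop.1 hz (δ - dist y' z) (by linarith)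
    have h2 : Filter.Tendsto (fun n => Kn (φ n)) Filter.atTop (nhds K) :=
      hlim.comp hφ.tendsto_atTop
    obtain ⟨N2, h3⟩ := Metric.tendsto_atTop.1 h2 (ε / 3) (by linarith)
    set n := max N1 N2
    have hn1 : dist (x (φ n)) z < δ - dist y' z := by
      simpa using h1 n (le_max_left _ _)
    have hn3 : dist (Kn (φ n)) K < ε / 3 := h3 n (le_max_right _ _)
    have hy'Kn : y' ∈ (Kn (φ n) : Set X) := by
      apply hx (φ n)
      apply subset_closure
      have : dist y' (x (φ n)) ≤ dist y' z + dist z (x (φ n)) := dist_triangle _ _ _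
      rw [dist_comm z] at this
      exact mem_ball.2 (by linarith)
    have hH : hausdorffDist (Kn (φ n) : Set X) (K : Set X) < ε / 3 := by
      rwa [NonemptyCompacts.dist_eq] at hn3
    have hne : EMetric.hausdorffEdist (Kn (φ n) : Set X) (K : Set X) ≠ ⊤ :=
      Metric.hausdorffEdist_ne_top_of_nonempty_of_bounded (Kn (φ n)).nonempty K.nonempty
        (Kn (φ n)).isCompact.isBounded K.isCompact.isBounded
    obtain ⟨w, hwK, hw⟩ := Metric.exists_dist_lt_of_hausdorffDist_lt hy'Kn hH hne
    refine ⟨w, hwK, ?_⟩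
    calc dist y w ≤ dist y y' + dist y' w := dist_triangle _ _ _
      _ < ε / 3 + ε / 3 := by linarith
      _ < ε := by linarith
  exact hclosed.isCompact
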